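/- (Upper bound of Proposition 1, non-interacting form.) Let d ≥ 1, let Λ ⊆ ℤ^d be finite, and let V^↑, V^↓ : Λ → [0,∞) be a magnetic potential with A_↑ ∩ A_↓ = ∅, A_↑ and A_↓ nonempty, and V₀ > 2d(√d + 1). Let N_↑, N_↓ be integers with 0 ≤ N_σ ≤ |A_σ| and set ρ_σ = N_σ/|A_σ|. Then S_{N↑}(h_{V^↑}) + S_{N↓}(h_{V^↓}) ≤ Σ_{σ ∈ {↑,↓}} [ e(ρ_σ)·|A_σ| − (e(ρ_σ)/(2d))·B(A_σ) ]. -/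

import Mathlib

open MeasureTheory
open scoped Classical

/-- The tight-binding dispersion relation `ε(k) = -2 Σᵢ cos kᵢ`. -/
noncomputable def eps (d : ℕ) (k : Fin d → ℝ) : ℝ := -2 * ∑ i, Real.cos (k i)

/-- `R(E) = (2π)^{-d} λ({k ∈ [-π,π]^d : ε(k) < E})`. -/
noncomputable def Rfun (d : ℕ) (E : ℝ) : ℝ :=
  (volume {k : Fin d → ℝ | (∀ i, k i ∈ Set.Icc (-Real.pi) Real.pi) ∧ eps d k < E}).toReal
    / (2 * Real.pi) ^ d

/-- `(2π)^{-d} ∫_{k ∈ [-π,π]^d, ε(k) < E} ε(k) dk`. -/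
noncomputable def en (d : ℕ) (E : ℝ) : ℝ :=
  (∫ k in {k : Fin d → ℝ | (∀ i, k i ∈ Set.Icc (-Real.pi) Real.pi) ∧ eps d k < E},
    eps d k) / (2 * Real.pi) ^ d

/-- The `ℓ¹` distance `|x - y|₁ = Σᵢ |xᵢ - yᵢ|` on `ℤ^d`. -/
def dist1 {d : ℕ} (x y : Fin d → ℤ) : ℕ := ∑ i, (x i - y i).natAbs

/-- The boundary `B(A)`: the number of pairs `(x, y)` with `x ∈ A`, `y ∉ A`,
`|x - y|₁ = 1`. -/
noncomputable def bdry {d : ℕ} (A : Set (Fin d → ℤ)) : ℕ :=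
  Set.ncard {p : (Fin d → ℤ) × (Fin d → ℤ) | p.1 ∈ A ∧ p.2 ∉ A ∧ dist1 p.1 p.2 = 1}

/-- The sum of the `N` smallest eigenvalues (with multiplicity) of a real
symmetric matrix. -/
noncomputable def sumSmallest {n : Type*} [Fintype n] [DecidableEq n]
    (M : Matrix n n ℝ) (N : ℕ) : ℝ :=
  if h : M.IsHermitian then
    sInf ((fun s : Finset n => ∑ i ∈ s, h.eigenvalues i) '' {s : Finset n | s.card = N})
  else 0

/-- The one-particle tight-binding Hamiltonian `h_V` on `Λ`:
`(h_V)_{xy} = -1` if `|x-y|₁ = 1`, `(h_V)_{xx} = V(x)`, and `0` otherwise. -/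
noncomputable def hV (d : ℕ) (Λ : Finset (Fin d → ℤ)) (V : (Fin d → ℤ) → ℝ) :
    Matrix Λ Λ ℝ :=
  fun x y => if dist1 (x : Fin d → ℤ) (y : Fin d → ℤ) = 1 then -1
    else if (x : Fin d → ℤ) = (y : Fin d → ℤ) then V x else 0

/-- `S_N(h_V)`: the sum of the `N` smallest eigenvalues of `h_V`. -/
noncomputable def SN (d : ℕ) (Λ : Finset (Fin d → ℤ)) (V : (Fin d → ℤ) → ℝ) (N : ℕ) : ℝ :=
  sumSmallest (hV d Λ V) N

/-- `A_σ = {x ∈ Λ : V^σ(x) = 0}`. -/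
noncomputable def Aset (d : ℕ) (Λ : Finset (Fin d → ℤ)) (V : (Fin d → ℤ) → ℝ) :
    Finset (Fin d → ℤ) :=
  Λ.filter (fun x => V x = 0)

/-- `γ(V₀) = 4d/(V₀-2d) + 16d³/((V₀-2d)² - 4d³)`. -/
noncomputable def gam (d : ℕ) (V0 : ℝ) : ℝ :=
  4*(d:ℝ)/(V0 - 2*d) + 16*(d:ℝ)^3/((V0 - 2*d)^2 - 4*(d:ℝ)^3)


section Aux
open Matrix Real

lemma bathtub {ι : Type*} [Fintype ι] [DecidableEq ι] (lam c : ι → ℝ)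
    (hc0 : ∀ i, 0 ≤ c i) (hc1 : ∀ i, c i ≤ 1) (N : ℕ) (hsum : ∑ i, c i = N) :
    ∃ s : Finset ι, s.card = N ∧ ∑ i ∈ s, lam i ≤ ∑ i, lam i * c i := by
  have hNle : N ≤ Fintype.card ι := by
    have : (N : ℝ) ≤ Fintype.card ι := by
      rw [← hsum]
      calc ∑ i, c i ≤ ∑ i : ι, (1:ℝ) := Finset.sum_le_sum fun i _ => hc1 i
        _ = Fintype.card ι := by simp
    exact_mod_cast this
  obtain ⟨s₀, -, hs₀⟩ := Finset.exists_subset_card_eq (s := (Finset.univ : Finset ι)) (n := N)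
    (by simpa using hNle)
  -- pick the minimizer
  obtain ⟨s, hsmem, hsmin⟩ := Finset.exists_min_image
    ((Finset.univ : Finset (Finset ι)).filter fun t => t.card = N)
    (fun t => ∑ i ∈ t, lam i)
    ⟨s₀, by simp [hs₀]⟩
  have hscard : s.card = N := (Finset.mem_filter.mp hsmem).2
  have hmin : ∀ t : Finset ι, t.card = N → ∑ i ∈ s, lam i ≤ ∑ i ∈ t, lam i := by
    intro t ht; exact hsmin t (by simp [ht])
  refine ⟨s, hscard, ?_⟩
  -- exchange property
  have hex : ∀ i ∈ s, ∀ j ∉ s, lam i ≤ lam j := by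
    intro i hi j hj
    have hcard : (insert j (s.erase i)).card = N := by
      rw [Finset.card_insert_of_notMem (fun h => hj (Finset.mem_of_mem_erase h)),
        Finset.card_erase_of_mem hi, hscard]
      have hN1 : 1 ≤ s.card := Finset.card_pos.mpr ⟨i, hi⟩
      omega
    have := hmin _ hcard
    rw [Finset.sum_insert (fun h => hj (Finset.mem_of_mem_erase h)),
      Finset.sum_erase_eq_sub hi] at this
    linarith
  by_cases hse : s = ∅
  · -- N = 0, c ≡ 0
    have hN0 : N = 0 := by rw [← hscard, hse]; simp
    have : ∀ i ∈ Finset.univ, c i = 0 := by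
      rw [hN0] at hsum
      intro i _
      exact le_antisymm (by
        by_contra h
        push_neg at h
        have : (0:ℝ) < ∑ i, c i := by
          refine Finset.sum_pos' (fun j _ => hc0 j) ⟨i, Finset.mem_univ i, h⟩
        simp [hsum] at this) (hc0 i)
    rw [hse]
    simp only [Finset.sum_empty]
    rw [Finset.sum_congr rfl (fun i hi => by rw [this i hi, mul_zero])]
    simp
  by_cases hsu : s = Finset.univ
  · -- c ≡ 1
    have hcall : ∀ i, c i = 1 := by
      have h1 : ∑ i, (1 - c i) = 0 := by
        rw [Finset.sum_sub_distrib, hsum]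
        simp [← hscard, hsu, Finset.card_univ]
      have := (Finset.sum_eq_zero_iff_of_nonneg (fun i _ => by linarith [hc1 i])).mp h1
      intro i; have := this i (Finset.mem_univ i); linarith
    rw [hsu]
    apply le_of_eq
    exact Finset.sum_congr rfl (fun i _ => by rw [hcall i, mul_one])
  · -- main case: threshold argument
    obtain ⟨i₀, hi₀s, hi₀max⟩ := Finset.exists_max_image s lam (Finset.nonempty_iff_ne_empty.mpr hse)
    set t := lam i₀ with ht
    have hts : ∀ i ∈ s, lam i ≤ t := fun i hi => hi₀max i hi
    have htc : ∀ j ∉ s, t ≤ lam j := fun j hj => hex i₀ hi₀s j hj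
    have key : ∑ i ∈ s, lam i - ∑ i, lam i * c i ≤ 0 := by
      have hsplit : ∑ i, lam i * c i = ∑ i ∈ s, lam i * c i + ∑ i ∈ sᶜ, lam i * c i := by
        rw [← Finset.sum_add_sum_compl s]
      have h1 : ∑ i ∈ s, lam i - ∑ i ∈ s, lam i * c i ≤ t * ∑ i ∈ s, (1 - c i) := by
        rw [Finset.mul_sum, ← Finset.sum_sub_distrib]
        refine Finset.sum_le_sum fun i hi => ?_
        have := hts i hi
        have h0 := hc0 i; have h1 := hc1 i
        nlinarith
      have h2 : t * ∑ i ∈ sᶜ, c i ≤ ∑ i ∈ sᶜ, lam i * c i := by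
        rw [Finset.mul_sum]
        refine Finset.sum_le_sum fun i hi => ?_
        have := htc i (by simpa using hi)
        have h0 := hc0 i
        nlinarith
      have h3 : ∑ i ∈ s, (1 - c i) = ∑ i ∈ sᶜ, c i := by
        rw [Finset.sum_sub_distrib]
        have : ∑ i ∈ s, c i + ∑ i ∈ sᶜ, c i = (N:ℝ) := by
          rw [Finset.sum_add_sum_compl, hsum]
        simp only [Finset.sum_const, nsmul_eq_mul, mul_one, hscard]
        linarith
      rw [hsplit]
      calc ∑ i ∈ s, lam i - (∑ i ∈ s, lam i * c i + ∑ i ∈ sᶜ, lam i * c i)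
          ≤ t * ∑ i ∈ s, (1 - c i) - ∑ i ∈ sᶜ, lam i * c i := by linarith
        _ ≤ t * ∑ i ∈ s, (1 - c i) - t * ∑ i ∈ sᶜ, c i := by linarith
        _ = 0 := by rw [h3]; ring
    linarith

lemma sumSmallest_le_trace {n : Type*} [Fintype n] [DecidableEq n]
    (M γ : Matrix n n ℝ) (hM : M.IsHermitian) (N : ℕ)
    (hq0 : ∀ v : n → ℝ, 0 ≤ v ⬝ᵥ γ *ᵥ v)
    (hq1 : ∀ v : n → ℝ, v ⬝ᵥ γ *ᵥ v ≤ v ⬝ᵥ v)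
    (htr : γ.trace = (N : ℝ)) :
    sumSmallest M N ≤ (γ * M).trace := by
  set U : Matrix n n ℝ := (hM.eigenvectorUnitary : Matrix n n ℝ) with hU
  have hUst : star U * U = 1 := Matrix.mem_unitaryGroup_iff'.mp hM.eigenvectorUnitary.2
  have hUst' : U * star U = 1 := Matrix.mem_unitaryGroup_iff.mp hM.eigenvectorUnitary.2
  set w : n → n → ℝ := fun i x => U x i with hw
  set c : n → ℝ := fun i => w i ⬝ᵥ γ *ᵥ w i with hc
  -- c i = (star U * γ * U) i i
  have hcdiag : ∀ i, c i = (star U * γ * U) i i := by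
    intro i
    simp only [hc, hw, dotProduct, Matrix.mulVec, Matrix.mul_apply, Matrix.star_apply,
      star_trivial, dotProduct, Finset.mul_sum, Finset.sum_mul]
    rw [Finset.sum_comm]
    exact Finset.sum_congr rfl fun x _ => Finset.sum_congr rfl fun y _ => by ring
  have hwnorm : ∀ i, w i ⬝ᵥ w i = 1 := by
    intro i
    have : (star U * U) i i = (1 : Matrix n n ℝ) i i := by rw [hUst]
    simp only [Matrix.mul_apply, Matrix.star_apply, Matrix.one_apply_eq] at this
    simpa [dotProduct, hw, star_trivial] using this
  have hc0 : ∀ i, 0 ≤ c i := fun i => hq0 (w i)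
  have hc1 : ∀ i, c i ≤ 1 := fun i => (hq1 (w i)).trans_eq (hwnorm i)
  have hcsum : ∑ i, c i = (N : ℝ) := by
    have : ∑ i, c i = (star U * γ * U).trace := by
      simp only [Matrix.trace, Matrix.diag]
      exact Finset.sum_congr rfl fun i _ => hcdiag i
    rw [this, Matrix.trace_mul_cycle, hUst', Matrix.one_mul, htr]
  -- trace (γ * M) = ∑ λ i * c i
  have htrace : (γ * M).trace = ∑ i, hM.eigenvalues i * c i := by
    have hspec := hM.spectral_theorem
    have e1 : γ * M = γ * U * Matrix.diagonal (RCLike.ofReal ∘ hM.eigenvalues) * star U := by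
      conv_lhs => rw [hspec]
      simp only [Unitary.conjStarAlgAut_apply, Unitary.coe_star]; rw [← hU]; simp only [Matrix.mul_assoc]
    rw [e1, Matrix.trace_mul_comm]
    have e2 : star U * (γ * U * Matrix.diagonal (RCLike.ofReal ∘ hM.eigenvalues))
        = (star U * γ * U) * Matrix.diagonal (RCLike.ofReal ∘ hM.eigenvalues) := by
      simp only [Matrix.mul_assoc]
    rw [e2, Matrix.trace]
    refine Finset.sum_congr rfl fun i _ => ?_
    have hd : ((star U * γ * U) * Matrix.diagonal (RCLike.ofReal ∘ hM.eigenvalues)).diag i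
        = (star U * γ * U) i i * hM.eigenvalues i := by
      rw [Matrix.diag, Matrix.mul_apply]
      rw [Finset.sum_eq_single i (fun j _ hj => by simp [Matrix.diagonal_apply, hj]) (by simp)]
      simp [Matrix.diagonal_apply]
    rw [hd, ← hcdiag i, mul_comm]
  obtain ⟨s, hscard, hs⟩ := bathtub hM.eigenvalues c hc0 hc1 N hcsum
  rw [htrace, sumSmallest, dif_pos hM]
  have hb : BddBelow ((fun s : Finset n => ∑ i ∈ s, hM.eigenvalues i) ''
      {s : Finset n | s.card = N}) :=
    ((Set.toFinite _).image _).bddBelow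
  exact (csInf_le hb ⟨s, hscard, rfl⟩).trans hs

/-- standard basis step: `± e_j`. -/
def estd (d : ℕ) (j : Fin d) (s : Bool) : Fin d → ℤ :=
  fun i => if i = j then (if s then 1 else -1) else 0

lemma estd_self {d : ℕ} (j : Fin d) (s : Bool) : estd d j s j = if s then 1 else -1 := by
  simp [estd]

lemma estd_ne {d : ℕ} {j i : Fin d} (s : Bool) (h : i ≠ j) : estd d j s i = 0 := by
  simp [estd, h]

lemma estd_self_ne_zero {d : ℕ} (j : Fin d) (s : Bool) : estd d j s j ≠ 0 := by
  cases s <;> simp [estd]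

/-- The set of nearest neighbors of `x`. -/
noncomputable def nbrs {d : ℕ} (x : Fin d → ℤ) : Finset (Fin d → ℤ) :=
  Finset.univ.image (fun p : Fin d × Bool => x + estd d p.1 p.2)

lemma dist1_add_estd {d : ℕ} (x : Fin d → ℤ) (j : Fin d) (s : Bool) :
    dist1 x (x + estd d j s) = 1 := by
  unfold dist1
  rw [Finset.sum_eq_single j]
  · simp only [Pi.add_apply, estd_self]
    cases s <;> simp
  · intro i _ hij
    simp [estd_ne s hij]
  · simp

lemma dist1_eq_one_iff {d : ℕ} (x y : Fin d → ℤ) :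
    dist1 x y = 1 ↔ ∃ j s, y = x + estd d j s := by
  constructor
  · intro h
    unfold dist1 at h
    have hex : ∃ j : Fin d, (x j - y j).natAbs ≠ 0 := by
      by_contra hc
      push_neg at hc
      rw [Finset.sum_eq_zero (fun i _ => hc i)] at h
      exact one_ne_zero h.symm
    obtain ⟨j, hj⟩ := hex
    have h2 : (x j - y j).natAbs + ∑ i ∈ Finset.univ.erase j, (x i - y i).natAbs = 1 := by
      rw [← h, ← Finset.add_sum_erase Finset.univ (fun i => (x i - y i).natAbs)
        (Finset.mem_univ j)]
    have hge : 1 ≤ (x j - y j).natAbs := Nat.one_le_iff_ne_zero.mpr hj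
    have hrest : ∑ i ∈ Finset.univ.erase j, (x i - y i).natAbs = 0 := by omega
    have hjj : (x j - y j).natAbs = 1 := by omega
    have hothers : ∀ i, i ≠ j → x i = y i := by
      intro i hi
      have := (Finset.sum_eq_zero_iff.mp hrest) i (Finset.mem_erase.mpr ⟨hi, Finset.mem_univ i⟩)
      omega
    rcases Int.natAbs_eq_iff.mp hjj with hpm | hpm
    · -- x j - y j = 1, so y j = x j - 1 : s = false
      refine ⟨j, false, funext fun i => ?_⟩
      by_cases hij : i = j
      · subst hij; simp [estd_self]; omega
      · simp [Pi.add_apply, estd_ne false hij, (hothers i hij).symm]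
    · refine ⟨j, true, funext fun i => ?_⟩
      by_cases hij : i = j
      · subst hij; simp [estd_self] at hpm ⊢; omega
      · simp [Pi.add_apply, estd_ne true hij, (hothers i hij).symm]
  · rintro ⟨j, s, rfl⟩
    exact dist1_add_estd x j s

lemma mem_nbrs {d : ℕ} (x y : Fin d → ℤ) : y ∈ nbrs x ↔ dist1 x y = 1 := by
  rw [dist1_eq_one_iff]
  simp only [nbrs, Finset.mem_image, Finset.mem_univ, true_and, Prod.exists]
  constructor
  · rintro ⟨j, s, rfl⟩; exact ⟨j, s, rfl⟩
  · rintro ⟨j, s, rfl⟩; exact ⟨j, s, rfl⟩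

lemma card_nbrs {d : ℕ} (x : Fin d → ℤ) : (nbrs x).card = 2 * d := by
  rw [nbrs, Finset.card_image_of_injective _ ?_, Finset.card_univ]
  · simp [Fintype.card_prod, mul_comm]
  · rintro ⟨j, s⟩ ⟨j', s'⟩ h
    simp only at h
    have he : estd d j s = estd d j' s' := by
      funext i
      have := congrFun h i
      simpa using this
    have hjj : j = j' := by
      by_contra hne
      have h1 := congrFun he j
      rw [estd_self, estd_ne s' (Ne.symm (fun hh => hne hh.symm))] at h1
      · cases s <;> simp at h1
    subst hjj
    have h2 := congrFun he j
    rw [estd_self, estd_self] at h2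
    cases s <;> cases s' <;> simp_all

variable {d : ℕ}

/-- Ordered pairs `(x,y)` with `x ∈ A`, `y ∈ A`, `|x-y|₁ = 1`. -/
noncomputable def inPairs (A : Finset (Fin d → ℤ)) :
    Finset ((Fin d → ℤ) × (Fin d → ℤ)) :=
  A.biUnion fun x => ((nbrs x).filter (· ∈ A)).image (Prod.mk x)

noncomputable def outPairs (A : Finset (Fin d → ℤ)) :
    Finset ((Fin d → ℤ) × (Fin d → ℤ)) :=
  A.biUnion fun x => ((nbrs x).filter (· ∉ A)).image (Prod.mk x)

lemma mem_inPairs (A : Finset (Fin d → ℤ)) (p : (Fin d → ℤ) × (Fin d → ℤ)) :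
    p ∈ inPairs A ↔ p.1 ∈ A ∧ p.2 ∈ A ∧ dist1 p.1 p.2 = 1 := by
  simp only [inPairs, Finset.mem_biUnion, Finset.mem_image, Finset.mem_filter, mem_nbrs]
  constructor
  · rintro ⟨x, hx, y, ⟨hd1, hy⟩, rfl⟩; exact ⟨hx, hy, hd1⟩
  · rintro ⟨h1, h2, h3⟩; exact ⟨p.1, h1, p.2, ⟨h3, h2⟩, rfl⟩

lemma mem_outPairs (A : Finset (Fin d → ℤ)) (p : (Fin d → ℤ) × (Fin d → ℤ)) :
    p ∈ outPairs A ↔ p.1 ∈ A ∧ p.2 ∉ A ∧ dist1 p.1 p.2 = 1 := by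
  simp only [outPairs, Finset.mem_biUnion, Finset.mem_image, Finset.mem_filter, mem_nbrs]
  constructor
  · rintro ⟨x, hx, y, ⟨hd1, hy⟩, rfl⟩; exact ⟨hx, hy, hd1⟩
  · rintro ⟨h1, h2, h3⟩; exact ⟨p.1, h1, p.2, ⟨h3, h2⟩, rfl⟩

lemma bdry_coe_eq (A : Finset (Fin d → ℤ)) : bdry (↑A : Set (Fin d → ℤ)) = (outPairs A).card := by
  have hset : {p : (Fin d → ℤ) × (Fin d → ℤ) |
      p.1 ∈ (↑A : Set (Fin d → ℤ)) ∧ p.2 ∉ (↑A : Set (Fin d → ℤ)) ∧ dist1 p.1 p.2 = 1}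
      = (↑(outPairs A) : Set _) := by
    ext p
    simp only [Set.mem_setOf_eq, Finset.coe_mem, Finset.mem_coe, mem_outPairs]
  rw [bdry, hset, Set.ncard_coe_finset]

private lemma card_biUnion_pairs (A : Finset (Fin d → ℤ)) (f : (Fin d → ℤ) → Finset (Fin d → ℤ)) :
    (A.biUnion fun x => (f x).image (Prod.mk x)).card = ∑ x ∈ A, (f x).card := by
  rw [Finset.card_biUnion]
  · exact Finset.sum_congr rfl fun x _ =>
      Finset.card_image_of_injective _ (fun a b h => by simpa using congrArg Prod.snd h)
  · intro x hx y hy hxy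
    simp only [Finset.disjoint_left, Finset.mem_image]
    rintro p ⟨a, _, rfl⟩ ⟨b, _, hb⟩
    exact hxy (by rw [← (Prod.mk.injEq x a y b).mp hb.symm |>.1])

lemma card_inPairs_add_bdry (A : Finset (Fin d → ℤ)) :
    (inPairs A).card + bdry (↑A : Set (Fin d → ℤ)) = 2 * d * A.card := by
  rw [bdry_coe_eq, inPairs, outPairs, card_biUnion_pairs, card_biUnion_pairs,
    ← Finset.sum_add_distrib]
  rw [Finset.sum_congr rfl (fun x _ => ?_), Finset.sum_const, smul_eq_mul, mul_comm]
  rw [Finset.card_filter_add_card_filter_not, card_nbrs]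

/-- The cube `[-π,π]^d`. -/
def box (d : ℕ) : Set (Fin d → ℝ) := {k | ∀ i, k i ∈ Set.Icc (-Real.pi) Real.pi}

noncomputable def Dset (d : ℕ) (μ : ℝ) : Set (Fin d → ℝ) :=
  {k | (∀ i, k i ∈ Set.Icc (-Real.pi) Real.pi) ∧ eps d k < μ}

lemma box_eq (d : ℕ) : box d = Set.pi Set.univ (fun _ : Fin d => Set.Icc (-Real.pi) Real.pi) := by
  ext k; simp only [box, Set.mem_setOf_eq, Set.mem_pi, Set.mem_univ, forall_true_left,
    true_implies]

lemma measurable_eps (d : ℕ) : Measurable (eps d) := by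
  unfold eps
  exact (measurable_const.mul (Finset.measurable_sum _ fun i _ =>
    (measurable_pi_apply i).cos))

lemma measurableSet_box (d : ℕ) : MeasurableSet (box d) := by
  rw [box_eq]; exact MeasurableSet.univ_pi fun i => measurableSet_Icc

lemma measurableSet_Dset (d : ℕ) (μ : ℝ) : MeasurableSet (Dset d μ) := by
  have : Dset d μ = box d ∩ {k | eps d k < μ} := rfl
  rw [this]
  exact (measurableSet_box d).inter (measurableSet_lt (measurable_eps d) measurable_const)

lemma Dset_subset_box (d : ℕ) (μ : ℝ) : Dset d μ ⊆ box d := fun k hk => hk.1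

lemma volume_box (d : ℕ) : volume (box d) = ENNReal.ofReal ((2*Real.pi)^d) := by
  rw [box_eq, volume_pi_pi]
  have h1 : volume (Set.Icc (-Real.pi) Real.pi) = ENNReal.ofReal (2*Real.pi) := by
    rw [Real.volume_Icc]; congr 1; ring
  rw [Finset.prod_congr rfl (fun _ _ => h1), Finset.prod_const, Finset.card_univ,
    Fintype.card_fin, ← ENNReal.ofReal_pow (by positivity)]

lemma volume_box_lt_top (d : ℕ) : volume (box d) < ⊤ := by
  rw [volume_box]; exact ENNReal.ofReal_lt_top

lemma volume_Dset_lt_top (d : ℕ) (μ : ℝ) : volume (Dset d μ) < ⊤ :=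
  lt_of_le_of_lt (measure_mono (Dset_subset_box d μ)) (volume_box_lt_top d)

/-- bounded measurable functions are integrable on subsets of the box -/
lemma integrableOn_of_bounded' {d : ℕ} {f : (Fin d → ℝ) → ℝ} (hf : Measurable f)
    {C : ℝ} (hC : ∀ x, |f x| ≤ C) {S : Set (Fin d → ℝ)} (hS : MeasurableSet S)
    (hSb : S ⊆ box d) : IntegrableOn f S := by
  refine Measure.integrableOn_of_bounded (M := C) ?_ hf.aestronglyMeasurable ?_
  · exact ne_of_lt (lt_of_le_of_lt (measure_mono hSb) (volume_box_lt_top d))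
  · exact Filter.Eventually.of_forall fun x => by simpa [Real.norm_eq_abs] using hC x

open Complex in
/-- Orthogonality of plane waves on the box. -/
lemma integral_box_cos {d : ℕ} (m : Fin d → ℤ) :
    ∫ k in box d, Real.cos (∑ i, (m i : ℝ) * k i)
      = if m = 0 then (2*Real.pi)^d else 0 := by
  set g : Fin d → ℝ → ℂ := fun i t =>
    Set.indicator (Set.Icc (-Real.pi) Real.pi)
      (fun t => Complex.exp (((m i : ℂ) * Complex.I) * t)) t with hg
  have hgint : ∀ i, Integrable (g i) := by
    intro i
    rw [hg]
    rw [integrable_indicator_iff measurableSet_Icc]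
    apply ContinuousOn.integrableOn_compact isCompact_Icc
    exact (Complex.continuous_exp.comp (continuous_const.mul Complex.continuous_ofReal)).continuousOn
  have hgval : ∀ i, ∫ t, g i t = if m i = 0 then ((2*Real.pi : ℝ) : ℂ) else 0 := by
    intro i
    rw [hg, integral_indicator measurableSet_Icc]
    by_cases hmi : m i = 0
    · simp only [hmi, Int.cast_zero, zero_mul, Complex.exp_zero, if_pos]
      rw [setIntegral_const]
      rw [Measure.real, Real.volume_Icc]
      norm_num
      rw [ENNReal.toReal_ofReal (by positivity)]
      push_cast
      ring
    · rw [if_neg hmi]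
      have hIcc : ∫ t in Set.Icc (-Real.pi) Real.pi,
            Complex.exp (((m i : ℂ) * Complex.I) * t)
          = ∫ t in (-Real.pi)..Real.pi, Complex.exp (((m i : ℂ) * Complex.I) * t) := by
        rw [intervalIntegral.integral_of_le (by linarith [Real.pi_pos]),
          ← integral_Icc_eq_integral_Ioc]
      rw [hIcc, integral_exp_mul_complex (by simp [hmi, Complex.I_ne_zero])]
      have hexp : Complex.exp ((m i : ℂ) * Complex.I * (Real.pi : ℂ))
          = Complex.exp ((m i : ℂ) * Complex.I * ((-Real.pi : ℝ) : ℂ)) := by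
        rw [Complex.exp_eq_exp_iff_exists_int]
        exact ⟨m i, by push_cast; ring⟩
      rw [hexp, sub_self, zero_div]
  -- the product identity
  have hprod : ∀ x : Fin d → ℝ, (∏ i, g i (x i))
      = Set.indicator (box d)
          (fun k => Complex.exp (((∑ i, (m i : ℝ) * k i : ℝ) : ℂ) * Complex.I)) x := by
    intro x
    by_cases hx : x ∈ box d
    · rw [Set.indicator_of_mem hx]
      have : ∀ i, g i (x i) = Complex.exp (((m i : ℂ) * Complex.I) * (x i)) := by
        intro i; rw [hg]; exact Set.indicator_of_mem (hx i) _
      rw [Finset.prod_congr rfl (fun i _ => this i), ← Complex.exp_sum]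
      congr 1
      push_cast
      rw [Finset.sum_mul]
      exact Finset.sum_congr rfl fun i _ => by ring
    · rw [Set.indicator_of_notMem hx]
      obtain ⟨i, hi⟩ : ∃ i, x i ∉ Set.Icc (-Real.pi) Real.pi := by
        by_contra hc; push_neg at hc; exact hx hc
      refine Finset.prod_eq_zero (Finset.mem_univ i) ?_
      rw [hg]; exact Set.indicator_of_notMem hi _
  have hbig := MeasureTheory.integral_fintype_prod_eq_prod (𝕜 := ℂ) (ι := Fin d) (μ := fun _ => volume)
    (fun i (t : ℝ) => g i t)
  rw [← volume_pi] at hbig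
  rw [show (fun (x : Fin d → ℝ) => ∏ i, g i (x i)) = _ from funext hprod] at hbig
  rw [integral_indicator (measurableSet_box d)] at hbig
  -- take real parts
  have hFint : IntegrableOn (fun k : Fin d → ℝ =>
      Complex.exp (((∑ i, (m i : ℝ) * k i : ℝ) : ℂ) * Complex.I)) (box d) := by
    rw [← integrable_indicator_iff (measurableSet_box d)]
    rw [show (Set.indicator (box d) fun k => Complex.exp (((∑ i, (m i : ℝ) * k i : ℝ) : ℂ) * Complex.I))
        = fun x => ∏ i, g i (x i) from (funext hprod).symm]
    exact Integrable.fintype_prod hgint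
  have hre := integral_re (μ := volume.restrict (box d)) hFint
  have hreeq : ∀ k : Fin d → ℝ,
      RCLike.re (Complex.exp (((∑ i, (m i : ℝ) * k i : ℝ) : ℂ) * Complex.I))
        = Real.cos (∑ i, (m i : ℝ) * k i) := by
    intro k
    rw [RCLike.re_to_complex]
    exact Complex.exp_ofReal_mul_I_re _
  rw [funext hreeq] at hre
  rw [hre, hbig, Finset.prod_congr rfl (fun i _ => hgval i)]
  by_cases hm : m = 0
  · rw [if_pos hm]
    have hone : ∀ i : Fin d, (if m i = 0 then ((2*Real.pi : ℝ):ℂ) else 0)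
        = ((2*Real.pi : ℝ):ℂ) := fun i => if_pos (by rw [hm]; rfl)
    rw [Finset.prod_congr rfl (fun i _ => hone i), Finset.prod_const,
      Finset.card_univ, Fintype.card_fin]
    rw [RCLike.re_to_complex]
    norm_cast
  · rw [if_neg hm]
    obtain ⟨i, hi⟩ : ∃ i, m i ≠ 0 := by
      by_contra hc; push_neg at hc; exact hm (funext hc)
    have hz : (∏ i : Fin d, if m i = 0 then ((2*Real.pi : ℝ):ℂ) else 0) = 0 :=
      Finset.prod_eq_zero (Finset.mem_univ i) (if_neg hi)
    rw [hz, RCLike.re_to_complex]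
    simp

/-- Coordinate symmetry of the Fermi sea integrals. -/
lemma integral_Dset_cos_eq {d : ℕ} (μ : ℝ) (i j : Fin d) :
    ∫ k in Dset d μ, Real.cos (k i) = ∫ k in Dset d μ, Real.cos (k j) := by
  classical
  set e : Fin d ≃ Fin d := Equiv.swap i j with he
  set T : ((_ : Fin d) → ℝ) ≃ᵐ ((_ : Fin d) → ℝ) :=
    MeasurableEquiv.piCongrLeft (fun _ => ℝ) e with hT
  have hmp : MeasurePreserving T volume volume :=
    volume_measurePreserving_piCongrLeft (fun _ => ℝ) e
  have hTapp : ∀ (x : Fin d → ℝ) (l : Fin d), T x l = x (e.symm l) := by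
    intro x l
    rw [hT]
    show (MeasurableEquiv.piCongrLeft (fun _ => ℝ) e) x l = x (e.symm l)
    rw [MeasurableEquiv.coe_piCongrLeft, Equiv.piCongrLeft_apply_eq_cast]
    rfl
  have hpre : T ⁻¹' (Dset d μ) = Dset d μ := by
    ext x
    simp only [Set.mem_preimage, Dset, Set.mem_setOf_eq]
    have h1 : (∀ l, T x l ∈ Set.Icc (-Real.pi) Real.pi) ↔
        (∀ l, x l ∈ Set.Icc (-Real.pi) Real.pi) := by
      constructor
      · intro h l
        have := h (e l)
        rwa [hTapp x (e l), Equiv.symm_apply_apply] at this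
      · intro h l; rw [hTapp]; exact h _
    have h2 : eps d (T x) = eps d x := by
      unfold eps
      congr 1
      rw [Finset.sum_congr rfl (fun l _ => by rw [hTapp])]
      exact Fintype.sum_equiv e.symm _ _ (fun l => rfl)
    rw [h1, h2]
  have key := hmp.setIntegral_preimage_emb T.measurableEmbedding
    (fun k => Real.cos (k i)) (Dset d μ)
  rw [hpre] at key
  rw [← key]
  refine setIntegral_congr_fun (measurableSet_Dset d μ) (fun x _ => ?_)
  rw [hTapp]
  congr 1
  rw [he]
  simp


lemma dist1_symm {d : ℕ} (x y : Fin d → ℤ) : dist1 x y = dist1 y x := by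
  unfold dist1
  refine Finset.sum_congr rfl fun i _ => ?_
  rw [← Int.natAbs_neg]
  congr 1
  ring

lemma hV_isHermitian (d : ℕ) (Λ : Finset (Fin d → ℤ)) (V : (Fin d → ℤ) → ℝ) :
    (hV d Λ V).IsHermitian := by
  rw [Matrix.IsHermitian]
  ext a b
  simp only [Matrix.conjTranspose_apply, star_trivial, hV]
  rw [dist1_symm (b : Fin d → ℤ) (a : Fin d → ℤ)]
  by_cases h1 : dist1 (a : Fin d → ℤ) (b : Fin d → ℤ) = 1
  · rw [if_pos h1, if_pos h1]
  · rw [if_neg h1, if_neg h1]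
    by_cases h2 : (b : Fin d → ℤ) = (a : Fin d → ℤ)
    · rw [if_pos h2, if_pos h2.symm, h2]
    · rw [if_neg h2, if_neg (fun hh => h2 hh.symm)]

lemma spin_bound (d : ℕ) (hd : 1 ≤ d) (Λ : Finset (Fin d → ℤ)) (V : (Fin d → ℤ) → ℝ)
    (hA : (Aset d Λ V).Nonempty) (N : ℕ) (hN : N ≤ (Aset d Λ V).card)
    (εF e : ℝ → ℝ)
    (hεF : ∀ ρ ∈ Set.Ioo (0:ℝ) 1,
      εF ρ ∈ Set.Ioo (-(2*(d:ℝ))) (2*(d:ℝ)) ∧ Rfun d (εF ρ) = ρ)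
    (he : ∀ ρ ∈ Set.Ioo (0:ℝ) 1, e ρ = en d (εF ρ))
    (he0 : e 0 = 0) (he1 : e 1 = 0) :
    SN d Λ V N ≤ e ((N:ℝ)/((Aset d Λ V).card : ℝ)) * ((Aset d Λ V).card : ℝ)
      - e ((N:ℝ)/((Aset d Λ V).card : ℝ))/(2*(d:ℝ))
          * (bdry (↑(Aset d Λ V) : Set (Fin d → ℤ)) : ℝ) := by
  classical
  set A := Aset d Λ V with hAdef
  have hAΛ : A ⊆ Λ := Finset.filter_subset _ _
  have hVA : ∀ x ∈ A, V x = 0 := fun x hx => (Finset.mem_filter.mp hx).2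
  have hcardpos : 0 < A.card := Finset.card_pos.mpr hA
  have hcardR : (0:ℝ) < (A.card : ℝ) := by exact_mod_cast hcardpos
  have hM := hV_isHermitian d Λ V
  have hπ : (0:ℝ) < (2*Real.pi)^d := by positivity
  have hdR : (0:ℝ) < (d:ℝ) := by exact_mod_cast hd
  have hvv : ∀ v : {x // x ∈ Λ} → ℝ, (0:ℝ) ≤ v ⬝ᵥ v :=
    fun v => Finset.sum_nonneg fun i _ => mul_self_nonneg _
  have hsum_ite : ∀ c : ℝ,
      (∑ a : {x // x ∈ Λ}, if (a : Fin d → ℤ) ∈ A then c else 0) = (A.card : ℝ) * c := by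
    intro c
    rw [Finset.sum_coe_sort Λ (fun x => if x ∈ A then c else 0), ← Finset.sum_filter,
      Finset.filter_mem_eq_inter, Finset.inter_eq_right.mpr hAΛ, Finset.sum_const,
      nsmul_eq_mul]
  by_cases hN0 : N = 0
  · -- trivial case via γ = 0
    subst hN0
    have hb := sumSmallest_le_trace (hV d Λ V) 0 hM 0
      (fun v => by simp [Matrix.zero_mulVec])
      (fun v => by rw [Matrix.zero_mulVec]; simpa using hvv v)
      (by simp)
    rw [Matrix.zero_mul, Matrix.trace_zero] at hb
    have hz : ((0:ℕ):ℝ)/((A.card):ℝ) = 0 := by simp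
    rw [hz, he0]
    simpa [SN] using hb
  by_cases hN1 : N = A.card
  · -- full case via diagonal γ
    set w : {x // x ∈ Λ} → ℝ := fun a => if (a : Fin d → ℤ) ∈ A then 1 else 0 with hw
    have hb := sumSmallest_le_trace (hV d Λ V) (Matrix.diagonal w) hM N
      (fun v => by
        simp only [Matrix.mulVec_diagonal, dotProduct]
        refine Finset.sum_nonneg fun a _ => ?_
        rw [hw]
        by_cases h : (a : Fin d → ℤ) ∈ A <;> simp [h, mul_self_nonneg])
      (fun v => by
        simp only [Matrix.mulVec_diagonal, dotProduct]
        refine Finset.sum_le_sum fun a _ => ?_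
        rw [hw]
        by_cases h : (a : Fin d → ℤ) ∈ A <;> simp [h, mul_self_nonneg])
      (by
        rw [Matrix.trace_diagonal, hw, hsum_ite, mul_one, hN1])
    have htr0 : (Matrix.diagonal w * hV d Λ V).trace = 0 := by
      rw [Matrix.trace]
      refine Finset.sum_eq_zero fun a _ => ?_
      rw [Matrix.diag, Matrix.diagonal_mul]
      have hdist : dist1 (a : Fin d → ℤ) (a : Fin d → ℤ) ≠ 1 := by
        unfold dist1
        rw [Finset.sum_eq_zero (fun i _ => by simp)]
        omega
      have hMaa : hV d Λ V a a = V (a : Fin d → ℤ) := by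
        rw [hV, if_neg hdist, if_pos rfl]
      rw [hMaa]
      by_cases h : (a : Fin d → ℤ) ∈ A
      · rw [hVA _ h, mul_zero]
      · have hw0 : w a = 0 := by rw [hw]; exact if_neg h
        rw [hw0, zero_mul]
    rw [htr0] at hb
    have hz : ((N:ℕ):ℝ)/((A.card):ℝ) = 1 := by
      rw [hN1]; exact div_self (ne_of_gt hcardR)
    rw [hz, he1]
    simpa [SN] using hb
  -- main case : 0 < N < |A|
  have hNpos : 0 < N := Nat.pos_of_ne_zero hN0
  have hNlt : N < A.card := lt_of_le_of_ne hN hN1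
  set ρ : ℝ := (N:ℝ)/((A.card):ℝ) with hρ
  have hρmem : ρ ∈ Set.Ioo (0:ℝ) 1 := by
    constructor
    · apply div_pos (by exact_mod_cast hNpos) hcardR
    · rw [div_lt_one hcardR]; exact_mod_cast hNlt
  set μ := εF ρ with hμ
  have hR : Rfun d μ = ρ := (hεF ρ hρmem).2
  have heρ : e ρ = en d μ := he ρ hρmem
  set D := Dset d μ with hDdef
  have hDmeas : MeasurableSet D := measurableSet_Dset d μ
  have hDbox : D ⊆ box d := Dset_subset_box d μ
  set j0 : Fin d := ⟨0, hd⟩ with hj0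
  set J := ∫ k in D, Real.cos (k j0) with hJ
  set cD : (Fin d → ℤ) → ℝ := fun m => ∫ k in D, Real.cos (∑ i, (m i : ℝ) * k i) with hcD
  set γ : Matrix {x // x ∈ Λ} {x // x ∈ Λ} ℝ := fun a b =>
    if ((a : Fin d → ℤ) ∈ A ∧ (b : Fin d → ℤ) ∈ A)
      then cD ((a : Fin d → ℤ) - (b : Fin d → ℤ)) / (2*Real.pi)^d else 0 with hγ
  have hmeas : ∀ m : Fin d → ℤ,
      Measurable fun k : Fin d → ℝ => Real.cos (∑ i, (m i : ℝ) * k i) :=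
    fun m => (Finset.measurable_sum _ fun i _ => (measurable_pi_apply i).const_mul _).cos
  have hint : ∀ (m : Fin d → ℤ) (S : Set (Fin d → ℝ)), MeasurableSet S → S ⊆ box d →
      IntegrableOn (fun k => Real.cos (∑ i, (m i : ℝ) * k i)) S :=
    fun m S hS hSb =>
      integrableOn_of_bounded' (hmeas m) (fun x => Real.abs_cos_le_one _) hS hSb
  set F : Finset {x // x ∈ Λ} := Finset.univ.filter (fun a => (a : Fin d → ℤ) ∈ A) with hF
  set ph : {x // x ∈ Λ} → (Fin d → ℝ) → ℝ :=
    fun a k => ∑ i, ((a : Fin d → ℤ) i : ℝ) * k i with hph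
  have hsub : ∀ (a b : {x // x ∈ Λ}) (k : Fin d → ℝ),
      (∑ i, ((((a : Fin d → ℤ) - (b : Fin d → ℤ)) i : ℝ)) * k i) = ph a k - ph b k := by
    intro a b k
    rw [hph, ← Finset.sum_sub_distrib]
    refine Finset.sum_congr rfl fun i _ => ?_
    simp only [Pi.sub_apply]
    push_cast
    ring
  have hsplit : ∀ f : {x // x ∈ Λ} → {x // x ∈ Λ} → ℝ,
      (∑ a : {x // x ∈ Λ}, ∑ b : {x // x ∈ Λ},
        if ((a : Fin d → ℤ) ∈ A ∧ (b : Fin d → ℤ) ∈ A) then f a b else 0)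
        = ∑ a ∈ F, ∑ b ∈ F, f a b := by
    intro f
    rw [hF]
    rw [Finset.sum_filter]
    refine Finset.sum_congr rfl fun a _ => ?_
    by_cases hPa : (a : Fin d → ℤ) ∈ A
    · rw [if_pos hPa, Finset.sum_filter]
      exact Finset.sum_congr rfl fun b _ => by simp [hPa]
    · rw [if_neg hPa]
      exact Finset.sum_eq_zero fun b _ => by simp [hPa]
  -- pointwise Fejér identity
  have hWpt : ∀ (v : {x // x ∈ Λ} → ℝ) (k : Fin d → ℝ),
      (∑ a ∈ F, v a * Real.cos (ph a k))^2 + (∑ a ∈ F, v a * Real.sin (ph a k))^2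
        = ∑ a ∈ F, ∑ b ∈ F, (v a * v b) *
            Real.cos (∑ i, ((((a : Fin d → ℤ) - (b : Fin d → ℤ)) i : ℝ)) * k i) := by
    intro v k
    rw [sq, sq, Finset.sum_mul_sum, Finset.sum_mul_sum, ← Finset.sum_add_distrib]
    refine Finset.sum_congr rfl fun a _ => ?_
    rw [← Finset.sum_add_distrib]
    refine Finset.sum_congr rfl fun b _ => ?_
    rw [hsub a b k, Real.cos_sub]
    ring
  -- expansion of the quadratic form as integrals over a set S
  have hexpand : ∀ (v : {x // x ∈ Λ} → ℝ) (S : Set (Fin d → ℝ)),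
      MeasurableSet S → S ⊆ box d →
      (∫ k in S, ((∑ a ∈ F, v a * Real.cos (ph a k))^2 + (∑ a ∈ F, v a * Real.sin (ph a k))^2))
        = ∑ a ∈ F, ∑ b ∈ F, (v a * v b) *
            (∫ k in S, Real.cos (∑ i, ((((a : Fin d → ℤ) - (b : Fin d → ℤ)) i : ℝ)) * k i)) := by
    intro v S hS hSb
    rw [setIntegral_congr_fun hS (fun k _ => hWpt v k)]
    rw [integral_finset_sum F (fun a _ => integrable_finset_sum F (fun b _ =>
      ((hint ((a : Fin d → ℤ) - (b : Fin d → ℤ)) S hS hSb).const_mul _)))]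
    refine Finset.sum_congr rfl fun a _ => ?_
    rw [integral_finset_sum F (fun b _ =>
      ((hint ((a : Fin d → ℤ) - (b : Fin d → ℤ)) S hS hSb).const_mul _))]
    exact Finset.sum_congr rfl fun b _ => integral_const_mul _ _
  -- quadratic form of γ
  have hquad : ∀ v : {x // x ∈ Λ} → ℝ, v ⬝ᵥ γ *ᵥ v
      = (∫ k in D, ((∑ a ∈ F, v a * Real.cos (ph a k))^2
          + (∑ a ∈ F, v a * Real.sin (ph a k))^2)) / (2*Real.pi)^d := by
    intro v
    have h1 : v ⬝ᵥ γ *ᵥ v = ∑ a ∈ F, ∑ b ∈ F,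
        (v a * v b) * (cD ((a : Fin d → ℤ) - (b : Fin d → ℤ)) / (2*Real.pi)^d) := by
      rw [dotProduct]
      simp only [Matrix.mulVec, dotProduct, hγ, Finset.mul_sum]
      rw [← hsplit (fun a b => (v a * v b) *
        (cD ((a : Fin d → ℤ) - (b : Fin d → ℤ)) / (2*Real.pi)^d))]
      refine Finset.sum_congr rfl fun a _ => Finset.sum_congr rfl fun b _ => ?_
      by_cases h : ((a : Fin d → ℤ) ∈ A ∧ (b : Fin d → ℤ) ∈ A)
      · rw [if_pos h, if_pos h]; ring
      · rw [if_neg h, if_neg h]; ring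
    rw [h1, hexpand v D hDmeas hDbox, Finset.sum_div]
    refine Finset.sum_congr rfl fun a _ => ?_
    rw [Finset.sum_div]
    refine Finset.sum_congr rfl fun b _ => ?_
    rw [hcD, mul_div_assoc]
  -- nonnegativity
  have hq0 : ∀ v : {x // x ∈ Λ} → ℝ, 0 ≤ v ⬝ᵥ γ *ᵥ v := by
    intro v
    rw [hquad v]
    apply div_nonneg _ (le_of_lt hπ)
    apply setIntegral_nonneg hDmeas
    intro k _
    positivity
  -- boundedness by 1
  have hq1 : ∀ v : {x // x ∈ Λ} → ℝ, v ⬝ᵥ γ *ᵥ v ≤ v ⬝ᵥ v := by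
    intro v
    rw [hquad v]
    set W : (Fin d → ℝ) → ℝ := fun k =>
      (∑ a ∈ F, v a * Real.cos (ph a k))^2 + (∑ a ∈ F, v a * Real.sin (ph a k))^2 with hWdef
    have hWmeas : Measurable W := by
      have hphm : ∀ a : {x // x ∈ Λ}, Measurable (ph a) := by
        intro a
        rw [hph]
        exact Finset.measurable_sum _ fun i _ => (measurable_pi_apply i).const_mul _
      exact (((Finset.measurable_sum F fun a _ => ((hphm a).cos.const_mul _)).pow_const 2).add
        ((Finset.measurable_sum F fun a _ => ((hphm a).sin.const_mul _)).pow_const 2))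
    have hWnn : ∀ k, 0 ≤ W k := fun k => by rw [hWdef]; positivity
    set Cv : ℝ := ∑ a ∈ F, |v a| with hCv
    have hWbd : ∀ k, |W k| ≤ Cv^2 + Cv^2 := by
      intro k
      rw [abs_of_nonneg (hWnn k), hWdef]
      have habs : ∀ (g : {x // x ∈ Λ} → ℝ) (hg : ∀ a, |g a| ≤ 1),
          (∑ a ∈ F, v a * g a)^2 ≤ Cv^2 := by
        intro g hg
        rw [← sq_abs]
        apply pow_le_pow_left₀ (abs_nonneg _)
        calc |∑ a ∈ F, v a * g a| ≤ ∑ a ∈ F, |v a * g a| := Finset.abs_sum_le_sum_abs _ _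
          _ ≤ ∑ a ∈ F, |v a| := by
            refine Finset.sum_le_sum fun a _ => ?_
            rw [abs_mul]
            exact mul_le_of_le_one_right (abs_nonneg _) (hg a)
      exact add_le_add (habs _ (fun a => Real.abs_cos_le_one _))
        (habs _ (fun a => Real.abs_sin_le_one _))
    have hWintbox : IntegrableOn W (box d) :=
      integrableOn_of_bounded' hWmeas hWbd (measurableSet_box d) (fun x hx => hx)
    have hmono : (∫ k in D, W k) ≤ ∫ k in box d, W k := by
      refine setIntegral_mono_set hWintbox ?_ (HasSubset.Subset.eventuallyLE hDbox)
      exact Filter.Eventually.of_forall fun k => hWnn k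
    have hboxval : (∫ k in box d, W k) = (∑ a ∈ F, v a * v a) * (2*Real.pi)^d := by
      rw [hWdef]
      rw [hexpand v (box d) (measurableSet_box d) (fun x hx => hx)]
      have hterm : ∀ a ∈ F, (∑ b ∈ F, (v a * v b) *
          (∫ k in box d, Real.cos (∑ i,
            ((((a : Fin d → ℤ) - (b : Fin d → ℤ)) i : ℝ)) * k i)))
          = v a * v a * (2*Real.pi)^d := by
        intro a ha
        have hval : ∀ b : {x // x ∈ Λ}, (∫ k in box d, Real.cos (∑ i,
            ((((a : Fin d → ℤ) - (b : Fin d → ℤ)) i : ℝ)) * k i))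
            = if ((a : Fin d → ℤ) - (b : Fin d → ℤ)) = 0 then (2*Real.pi)^d else 0 :=
          fun b => integral_box_cos _
        rw [Finset.sum_congr rfl (fun b _ => by rw [hval b])]
        rw [Finset.sum_eq_single_of_mem a ha]
        · rw [if_pos (sub_self _)]
        · intro b _ hba
          rw [if_neg, mul_zero]
          intro h0
          exact hba (Subtype.coe_injective (sub_eq_zero.mp h0)).symm
      rw [Finset.sum_congr rfl hterm, ← Finset.sum_mul]
    calc (∫ k in D, W k) / (2*Real.pi)^d
        ≤ (∫ k in box d, W k) / (2*Real.pi)^d := by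
          exact (div_le_div_iff_of_pos_right hπ).mpr hmono
      _ = ∑ a ∈ F, v a * v a := by
          rw [hboxval, mul_div_cancel_right₀ _ (ne_of_gt hπ)]
      _ ≤ v ⬝ᵥ v := by
          rw [dotProduct]
          exact Finset.sum_le_sum_of_subset_of_nonneg (Finset.subset_univ F)
            (fun a _ _ => mul_self_nonneg _)
  -- trace of γ equals N
  have htrγ : γ.trace = (N : ℝ) := by
    rw [Matrix.trace]
    have hdiag : ∀ a : {x // x ∈ Λ}, γ.diag a
        = if (a : Fin d → ℤ) ∈ A then cD 0 / (2*Real.pi)^d else 0 := by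
      intro a
      rw [Matrix.diag]
      simp only [hγ]
      by_cases h : (a : Fin d → ℤ) ∈ A
      · rw [if_pos ⟨h, h⟩, if_pos h, sub_self]
      · rw [if_neg (fun hc => h hc.1), if_neg h]
    rw [Finset.sum_congr rfl (fun a _ => hdiag a), hsum_ite]
    have hcD0 : cD 0 = (volume D).toReal := by
      simp only [hcD]
      have hone : ∀ k ∈ D, Real.cos (∑ i, ((0 : Fin d → ℤ) i : ℝ) * k i) = 1 := by
        intro k _
        simp
      rw [setIntegral_congr_fun hDmeas hone, setIntegral_const, smul_eq_mul, mul_one]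
      rfl
    have hRfun : cD 0 / (2*Real.pi)^d = ρ := by
      rw [hcD0, ← hR]
      rfl
    rw [hRfun, hρ, mul_div_cancel₀ _ (ne_of_gt hcardR)]
  -- the common hopping integral
  have hcDJ : ∀ a b : {x // x ∈ Λ}, dist1 (a : Fin d → ℤ) (b : Fin d → ℤ) = 1 →
      cD ((a : Fin d → ℤ) - (b : Fin d → ℤ)) = J := by
    intro a b hab
    obtain ⟨j, s, hb⟩ := (dist1_eq_one_iff _ _).mp hab
    have hptw : ∀ k ∈ D, Real.cos (∑ i, ((((a : Fin d → ℤ) - (b : Fin d → ℤ)) i : ℝ)) * k i)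
        = Real.cos (k j) := by
      intro k _
      have hsum1 : (∑ i, ((((a : Fin d → ℤ) - (b : Fin d → ℤ)) i : ℝ)) * k i)
          = -((estd d j s j : ℝ) * k j) := by
        rw [Finset.sum_eq_single j]
        · rw [hb]; simp only [Pi.sub_apply, Pi.add_apply]; push_cast; ring
        · intro i _ hij
          rw [hb]
          simp only [Pi.sub_apply, Pi.add_apply, estd_ne s hij]
          push_cast
          ring
        · simp
      rw [hsum1, Real.cos_neg]
      cases s
      · rw [estd_self]; norm_num
      · rw [estd_self]; norm_num
    simp only [hcD]
    rw [setIntegral_congr_fun hDmeas hptw, hJ]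
    exact integral_Dset_cos_eq μ j j0
  -- trace of γ * hV
  have htrM : (γ * hV d Λ V).trace = ((inPairs A).card : ℝ) * (-J / (2*Real.pi)^d) := by
    rw [Matrix.trace]
    have hterm : ∀ a b : {x // x ∈ Λ}, γ a b * hV d Λ V b a
        = if ((a : Fin d → ℤ) ∈ A ∧ (b : Fin d → ℤ) ∈ A
            ∧ dist1 (a : Fin d → ℤ) (b : Fin d → ℤ) = 1)
          then -J / (2*Real.pi)^d else 0 := by
      intro a b
      simp only [hγ]
      by_cases hab : ((a : Fin d → ℤ) ∈ A ∧ (b : Fin d → ℤ) ∈ A)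
      · rw [if_pos hab]
        by_cases hd1 : dist1 (a : Fin d → ℤ) (b : Fin d → ℤ) = 1
        · rw [if_pos ⟨hab.1, hab.2, hd1⟩]
          have hM1 : hV d Λ V b a = -1 := by
            rw [hV, if_pos (by rwa [dist1_symm])]
          rw [hM1, hcDJ a b hd1]
          ring
        · rw [if_neg (fun hc => hd1 hc.2.2)]
          have hM0 : hV d Λ V b a = 0 := by
            rw [hV, if_neg (fun hc => hd1 (by rwa [dist1_symm] at hc))]
            by_cases heq : (b : Fin d → ℤ) = (a : Fin d → ℤ)
            · rw [if_pos heq]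
              exact hVA _ hab.2
            · rw [if_neg heq]
          rw [hM0, mul_zero]
      · rw [if_neg hab, if_neg (fun hc => hab ⟨hc.1, hc.2.1⟩), zero_mul]
    have hdsum : ∀ a : {x // x ∈ Λ}, (γ * hV d Λ V).diag a
        = ∑ b : {x // x ∈ Λ}, γ a b * hV d Λ V b a := by
      intro a
      rw [Matrix.diag, Matrix.mul_apply]
    rw [Finset.sum_congr rfl (fun a _ => by
      rw [hdsum a, Finset.sum_congr rfl (fun b _ => hterm a b)])]
    -- now count the pairs
    have h1 : ∀ a : {x // x ∈ Λ}, (∑ b : {x // x ∈ Λ},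
        if ((a : Fin d → ℤ) ∈ A ∧ (b : Fin d → ℤ) ∈ A
            ∧ dist1 (a : Fin d → ℤ) (b : Fin d → ℤ) = 1)
          then -J / (2*Real.pi)^d else 0)
        = ∑ y ∈ Λ, (if ((a : Fin d → ℤ) ∈ A ∧ y ∈ A
            ∧ dist1 (a : Fin d → ℤ) y = 1) then -J / (2*Real.pi)^d else 0) := by
      intro a
      exact Finset.sum_coe_sort Λ (fun y => if ((a : Fin d → ℤ) ∈ A ∧ y ∈ A
        ∧ dist1 (a : Fin d → ℤ) y = 1) then -J / (2*Real.pi)^d else 0)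
    rw [Finset.sum_congr rfl (fun a _ => h1 a),
      Finset.sum_coe_sort Λ (fun x => ∑ y ∈ Λ,
        (if (x ∈ A ∧ y ∈ A ∧ dist1 x y = 1) then -J / (2*Real.pi)^d else 0))]
    rw [← Finset.sum_product']
    rw [← Finset.sum_filter]
    have hfe : (Λ ×ˢ Λ).filter
        (fun p : (Fin d → ℤ) × (Fin d → ℤ) => p.1 ∈ A ∧ p.2 ∈ A ∧ dist1 p.1 p.2 = 1)
        = inPairs A := by
      ext p
      rw [Finset.mem_filter, Finset.mem_product, mem_inPairs]
      constructor
      · rintro ⟨-, h⟩; exact h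
      · rintro ⟨h1', h2', h3'⟩; exact ⟨⟨hAΛ h1', hAΛ h2'⟩, h1', h2', h3'⟩
    rw [hfe, Finset.sum_const, nsmul_eq_mul]
  -- the eps integral
  have hepsint : (∫ k in D, eps d k) = -2 * (d : ℝ) * J := by
    have h1 : (∫ k in D, eps d k) = -2 * ∫ k in D, (∑ i, Real.cos (k i)) := by
      rw [← integral_const_mul]
      rfl
    have hcint : ∀ i : Fin d, IntegrableOn (fun k : Fin d → ℝ => Real.cos (k i)) D := by
      intro i
      exact integrableOn_of_bounded' (measurable_pi_apply i).cos
        (fun x => Real.abs_cos_le_one _) hDmeas hDbox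
    rw [h1, integral_finset_sum Finset.univ (fun i _ => hcint i)]
    rw [Finset.sum_congr rfl (fun i _ => integral_Dset_cos_eq μ i j0)]
    rw [Finset.sum_const, Finset.card_univ, Fintype.card_fin, nsmul_eq_mul, ← hJ]
    ring
  have hJen : -J / (2*Real.pi)^d = en d μ / (2*(d:ℝ)) := by
    have hen : en d μ = (∫ k in D, eps d k) / (2*Real.pi)^d := rfl
    rw [hen, hepsint]
    field_simp
  -- conclude
  have hkey := sumSmallest_le_trace (hV d Λ V) γ hM N hq0 hq1 htrγ
  have hBcast : ((inPairs A).card : ℝ) = 2*(d:ℝ)*(A.card : ℝ) - (bdry (↑A : Set (Fin d → ℤ)) : ℝ) := by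
    have hnat := card_inPairs_add_bdry A
    have := congrArg (fun n : ℕ => (n : ℝ)) hnat
    push_cast at this
    linarith
  have hRHS : (γ * hV d Λ V).trace
      = e ρ * (A.card : ℝ) - e ρ / (2*(d:ℝ)) * (bdry (↑A : Set (Fin d → ℤ)) : ℝ) := by
    rw [htrM, hJen, hBcast, heρ]
    field_simp
  calc SN d Λ V N = sumSmallest (hV d Λ V) N := rfl
    _ ≤ (γ * hV d Λ V).trace := hkey
    _ = e ρ * (A.card : ℝ) - e ρ / (2*(d:ℝ)) * (bdry (↑A : Set (Fin d → ℤ)) : ℝ) := hRHS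

end Aux

/-- Upper bound of Proposition 1 (non-interacting form): for a magnetic potential
with `A_↑ ∩ A_↓ = ∅` and gap `V₀ > 2d(√d + 1)`,
`S_{N↑}(h_{V↑}) + S_{N↓}(h_{V↓}) ≤ Σ_σ [e(ρ_σ)|A_σ| - (e(ρ_σ)/2d)·B(A_σ)]`. -/
theorem stmt12 (d : ℕ) (hd : 1 ≤ d) (Λ : Finset (Fin d → ℤ))
    (Vup Vdn : (Fin d → ℤ) → ℝ)
    (hVup : ∀ x ∈ Λ, 0 ≤ Vup x) (hVdn : ∀ x ∈ Λ, 0 ≤ Vdn x)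
    (hdisj : Aset d Λ Vup ∩ Aset d Λ Vdn = ∅)
    (hup : (Aset d Λ Vup).Nonempty) (hdn : (Aset d Λ Vdn).Nonempty)
    (V0 : ℝ)
    (hV0low : ∀ x ∈ Λ, (Vup x ≠ 0 → V0 ≤ Vup x) ∧ (Vdn x ≠ 0 → V0 ≤ Vdn x))
    (hV0 : 2*(d:ℝ)*(Real.sqrt d + 1) < V0)
    (Nup Ndn : ℕ)
    (hNup : Nup ≤ (Aset d Λ Vup).card) (hNdn : Ndn ≤ (Aset d Λ Vdn).card)
    (εF e : ℝ → ℝ)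
    (hεF : ∀ ρ ∈ Set.Ioo (0:ℝ) 1,
      εF ρ ∈ Set.Ioo (-(2*(d:ℝ))) (2*(d:ℝ)) ∧ Rfun d (εF ρ) = ρ)
    (he : ∀ ρ ∈ Set.Ioo (0:ℝ) 1, e ρ = en d (εF ρ))
    (he0 : e 0 = 0) (he1 : e 1 = 0) :
    SN d Λ Vup Nup + SN d Λ Vdn Ndn ≤
      (e ((Nup:ℝ)/((Aset d Λ Vup).card : ℝ)) * ((Aset d Λ Vup).card : ℝ)
        - e ((Nup:ℝ)/((Aset d Λ Vup).card : ℝ))/(2*(d:ℝ))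
            * (bdry (↑(Aset d Λ Vup) : Set (Fin d → ℤ)) : ℝ))
      + (e ((Ndn:ℝ)/((Aset d Λ Vdn).card : ℝ)) * ((Aset d Λ Vdn).card : ℝ)
        - e ((Ndn:ℝ)/((Aset d Λ Vdn).card : ℝ))/(2*(d:ℝ))
            * (bdry (↑(Aset d Λ Vdn) : Set (Fin d → ℤ)) : ℝ)) := by
  exact add_le_add
    (spin_bound d hd Λ Vup hup Nup hNup εF e hεF he he0 he1)
    (spin_bound d hd Λ Vdn hdn Ndn hNdn εF e hεF he he0 he1)
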